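/- arXiv:1010.4425 — 2 statements merged into one kernel-verified Lean document; each statement's English description precedes it below -/
import Mathlib

section
/- Let m ≥ 2 be an integer and ω ∈ (0, m−1] irrational, with digits bₙ(ω), iterates τ_m^n(ω), and continuants pₙ, qₙ as in the m-adic continued fraction algorithm. Then for all n ≥ 1, ω − pₙ/qₙ = (−1)^n · τ_m^n(ω) · m^{b₁+⋯+bₙ} / (qₙ · (qₙ + τ_m^n(ω)·m^{bₙ}·qₙ₋₁)). -/
noncomputable def b1 (m : ℕ) (x : ℝ) : ℤ := ⌊Real.log x⁻¹ / Real.log m⌋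

noncomputable def tau (m : ℕ) (x : ℝ) : ℝ :=
  (m : ℝ) ^ (Real.log x⁻¹ / Real.log m - (b1 m x : ℝ)) - 1

noncomputable def digit (m : ℕ) (ω : ℝ) (n : ℕ) : ℤ := b1 m ((tau m)^[n - 1] ω)

lemma tau_eq (m : ℕ) (hm : 2 ≤ m) (x : ℝ) (hx : 0 < x) :
    tau m x = (x * (m : ℝ) ^ (b1 m x))⁻¹ - 1 := by
  have hm0 : (0:ℝ) < m := by positivity
  have hm1 : (m:ℝ) ≠ 1 := by
    have : (2:ℝ) ≤ m := by exact_mod_cast hm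
    linarith
  unfold tau
  rw [Real.rpow_sub hm0, Real.rpow_intCast]
  have h1 : (m:ℝ) ^ (Real.log x⁻¹ / Real.log m) = x⁻¹ := by
    have := Real.rpow_logb hm0 hm1 (inv_pos.mpr hx)
    simpa [Real.logb] using this
  rw [h1, mul_inv]
  ring

lemma tau_key (m : ℕ) (hm : 2 ≤ m) (x : ℝ) (hx : 0 < x) :
    x * ((m : ℝ) ^ (b1 m x) * (1 + tau m x)) = 1 := by
  have hm0 : (0:ℝ) < m := by positivity
  have hne : x * (m : ℝ) ^ (b1 m x) ≠ 0 := by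
    have : (0:ℝ) < (m:ℝ) ^ (b1 m x) := zpow_pos hm0 _
    positivity
  rw [tau_eq m hm x hx]
  field_simp
  ring

lemma tau_irrational (m : ℕ) (hm : 2 ≤ m) (x : ℝ) (hx : 0 < x) (hirr : Irrational x) :
    Irrational (tau m x) := by
  rw [tau_eq m hm x hx]
  have hq : ((m:ℚ) ^ (b1 m x) : ℚ) ≠ 0 := by
    apply zpow_ne_zero
    exact_mod_cast (by omega : m ≠ 0)
  have h1 : Irrational (x * (((m:ℚ) ^ (b1 m x) : ℚ) : ℝ)) := hirr.mul_ratCast hq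
  have hcast : (((m:ℚ) ^ (b1 m x) : ℚ) : ℝ) = (m:ℝ) ^ (b1 m x) := by push_cast; ring
  rw [hcast] at h1
  have h2 := h1.inv
  simpa using h2.sub_intCast 1

lemma tau_pos (m : ℕ) (hm : 2 ≤ m) (x : ℝ) (hx : 0 < x) (hirr : Irrational x) :
    0 < tau m x := by
  have hirr' := tau_irrational m hm x hx hirr
  have h0 : 0 ≤ tau m x := by
    unfold tau
    have h1 : (1:ℝ) ≤ (m:ℝ) ^ (Real.log x⁻¹ / Real.log m - (b1 m x : ℝ)) := by
      apply Real.one_le_rpow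
      · exact_mod_cast (by omega : 1 ≤ m)
      · have := Int.floor_le (Real.log x⁻¹ / Real.log m)
        unfold b1
        linarith
    linarith
  exact lt_of_le_of_ne h0 (fun h => hirr'.ne_zero h.symm)

lemma iter_pos_irr (m : ℕ) (hm : 2 ≤ m) (ω : ℝ) (hω0 : 0 < ω) (hω : Irrational ω) :
    ∀ n, 0 < (tau m)^[n] ω ∧ Irrational ((tau m)^[n] ω) := by
  intro n
  induction n with
  | zero => exact ⟨hω0, hω⟩
  | succ k ih =>
    rw [Function.iterate_succ_apply']
    exact ⟨tau_pos m hm _ ih.1 ih.2, tau_irrational m hm _ ih.1 ih.2⟩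

theorem error_formula (m : ℕ) (hm : 2 ≤ m) (ω : ℝ) (hω : Irrational ω) (hω0 : 0 < ω) (hω1 : ω ≤ (m : ℝ) - 1)
    (p q : ℕ → ℝ)
    (hp0 : p 0 = 0) (hq0 : q 0 = 1) (hp1 : p 1 = 1) (hq1 : q 1 = (m : ℝ) ^ (digit m ω 1))
    (hp : ∀ n, 2 ≤ n → p n = (m : ℝ) ^ (digit m ω n) * p (n - 1) + (m : ℝ) ^ (digit m ω (n - 1)) * p (n - 2))
    (hq : ∀ n, 2 ≤ n → q n = (m : ℝ) ^ (digit m ω n) * q (n - 1) + (m : ℝ) ^ (digit m ω (n - 1)) * q (n - 2)) :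
    ∀ n, 1 ≤ n →
      ω - p n / q n =
        (-1 : ℝ) ^ n * (tau m)^[n] ω * (m : ℝ) ^ (∑ k ∈ Finset.Icc 1 n, digit m ω k) /
          (q n * (q n + (tau m)^[n] ω * (m : ℝ) ^ (digit m ω n) * q (n - 1))) := by
  have hm0 : (0:ℝ) < m := by positivity
  have hmne : (m:ℝ) ≠ 0 := ne_of_gt hm0
  set x : ℕ → ℝ := fun n => (tau m)^[n] ω with hx
  set M : ℕ → ℝ := fun n => (m:ℝ) ^ (digit m ω n) with hM
  have hMpos : ∀ n, 0 < M n := fun n => zpow_pos hm0 _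
  have hxpi : ∀ n, 0 < x n ∧ Irrational (x n) := iter_pos_irr m hm ω hω0 hω
  -- key relation at each step
  have hrel : ∀ k, x k * (M (k + 1) * (1 + x (k + 1))) = 1 := by
    intro k
    have h1 : digit m ω (k + 1) = b1 m (x k) := rfl
    have h2 : x (k + 1) = tau m (x k) := Function.iterate_succ_apply' _ _ _
    rw [hM]
    simp only [h1, h2]
    exact tau_key m hm (x k) (hxpi k).1
  -- main invariant
  have J : ∀ k : ℕ,
      (ω * (q (k+1) + x (k+1) * M (k+1) * q k) = p (k+1) + x (k+1) * M (k+1) * p k) ∧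
      (p (k+1) * q k - p k * q (k+1) = (-1:ℝ)^k * (m:ℝ) ^ (∑ j ∈ Finset.Icc 1 k, digit m ω j)) ∧
      0 < q (k+1) ∧ 0 < q k := by
    intro k
    induction k with
    | zero =>
      refine ⟨?_, ?_, ?_, ?_⟩
      · rw [hp0, hq0, hp1, hq1]
        have := hrel 0
        simp only [show x 0 = ω from rfl] at this
        calc ω * ((m:ℝ) ^ (digit m ω 1) + x 1 * M 1 * 1)
            = ω * (M 1 * (1 + x 1)) := by rw [hM]; ring
          _ = 1 + x 1 * M 1 * 0 := by rw [this]; ring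
      · simp [hp0, hq0, hp1]
      · rw [hq1]; exact hMpos 1
      · rw [hq0]; exact one_pos
    | succ k ih =>
      obtain ⟨hA, hB, hqk1, hqk⟩ := ih
      have hrec_p := hp (k + 2) (by omega)
      have hrec_q := hq (k + 2) (by omega)
      have e1 : k + 2 - 1 = k + 1 := rfl
      have e2 : k + 2 - 2 = k := rfl
      rw [e1, e2] at hrec_p hrec_q
      have hr := hrel (k + 1)
      refine ⟨?_, ?_, ?_, hqk1⟩
      · rw [hrec_p, hrec_q]
        have hMdef1 : (m:ℝ) ^ (digit m ω (k+2)) = M (k+2) := rfl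
        have hMdef2 : (m:ℝ) ^ (digit m ω (k+1)) = M (k+1) := rfl
        rw [hMdef1, hMdef2]
        linear_combination (M (k+2) * (1 + x (k+2))) * hA
          - (M (k+1) * (q k * ω - p k)) * hr
      · rw [hrec_p, hrec_q]
        have hsum : (∑ j ∈ Finset.Icc 1 (k+1), digit m ω j)
            = (∑ j ∈ Finset.Icc 1 k, digit m ω j) + digit m ω (k+1) :=
          Finset.sum_Icc_succ_top (by omega) _
        rw [hsum, zpow_add₀ hmne, pow_succ]
        have hMdef2 : (m:ℝ) ^ (digit m ω (k+1)) = M (k+1) := rfl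
        rw [hMdef2]
        linear_combination (-(M (k+1))) * hB
      · rw [hrec_q]
        have h1 := hMpos (k+2)
        have h2 := hMpos (k+1)
        nlinarith
  -- conclude
  intro n hn
  obtain ⟨k, rfl⟩ : ∃ k, n = k + 1 := ⟨n - 1, by omega⟩
  obtain ⟨hA, hB, hq1pos, hq0pos⟩ := J k
  have hxpos := (hxpi (k+1)).1
  have hMpos' := hMpos (k+1)
  have hD : 0 < q (k+1) + x (k+1) * M (k+1) * q k := by
    have := mul_pos (mul_pos hxpos hMpos') hq0pos
    linarith
  have key : ω = (p (k+1) + x (k+1) * M (k+1) * p k) / (q (k+1) + x (k+1) * M (k+1) * q k) := by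
    rw [eq_div_iff hD.ne']
    exact hA
  have hsum : (∑ j ∈ Finset.Icc 1 (k+1), digit m ω j)
      = (∑ j ∈ Finset.Icc 1 k, digit m ω j) + digit m ω (k+1) :=
    Finset.sum_Icc_succ_top (by omega) _
  have main : ω - p (k+1) / q (k+1) =
      (-1:ℝ)^(k+1) * x (k+1) *
        (m:ℝ) ^ ((∑ j ∈ Finset.Icc 1 k, digit m ω j) + digit m ω (k+1)) /
        (q (k+1) * (q (k+1) + x (k+1) * M (k+1) * q k)) := by
    conv_lhs => rw [key]
    rw [div_sub_div _ _ hD.ne' hq1pos.ne',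
      div_eq_div_iff (mul_pos hD hq1pos).ne' (mul_pos hq1pos hD).ne',
      zpow_add₀ hmne, pow_succ]
    have hMdef : (m:ℝ) ^ (digit m ω (k+1)) = M (k+1) := rfl
    rw [hMdef]
    linear_combination (-(x (k+1) * M (k+1) * ((q (k+1) + x (k+1) * M (k+1) * q k) * q (k+1)))) * hB
  rw [hsum]
  exact main
end

section
/- Let m ≥ 2 be an integer and ω ∈ (0, m−1] irrational, with digits bₙ, iterates τ_m^n(ω), and continuants pₙ, qₙ. Then for all n ≥ 1, |ω − pₙ/qₙ| = m^{b₁+⋯+bₙ} / (qₙ · (qₙ₊₁ + τ_m^{n+1}(ω)·m^{bₙ₊₁}·qₙ)). -/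
lemma tau_nonneg (m : ℕ) (hm : 2 ≤ m) (y : ℝ) : 0 ≤ tau m y := by
  have h1 : (1:ℝ) ≤ m := by exact_mod_cast Nat.one_le_of_lt hm
  have h2 : (0:ℝ) ≤ Real.log y⁻¹ / Real.log m - (b1 m y : ℝ) :=
    sub_nonneg.2 (Int.floor_le _)
  have h3 := Real.rpow_le_rpow_of_exponent_le h1 h2
  simp only [Real.rpow_zero] at h3
  unfold tau
  linarith

lemma key_identity (m : ℕ) (hm : 2 ≤ m) (y : ℝ) (hy : 0 < y) :
    y * (1 + tau m y) * (m : ℝ) ^ (b1 m y) = 1 := by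
  have hm0 : (0:ℝ) < m := by positivity
  have hm1 : (1:ℝ) < m := by exact_mod_cast Nat.lt_of_lt_of_le one_lt_two hm
  have hlog : Real.log m ≠ 0 := (Real.log_pos hm1).ne'
  have hz : ((m:ℝ) ^ (b1 m y)) ≠ 0 := zpow_ne_zero _ hm0.ne'
  have h1 : 1 + tau m y =
      (m:ℝ) ^ (Real.log y⁻¹ / Real.log m - (b1 m y : ℝ)) := by
    unfold tau; ring
  rw [h1, Real.rpow_sub hm0, Real.rpow_intCast]
  have h3 : (m:ℝ) ^ (Real.log y⁻¹ / Real.log m) = y⁻¹ := by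
    rw [Real.rpow_def_of_pos hm0, mul_comm, div_mul_cancel₀ _ hlog]
    exact Real.exp_log (inv_pos.2 hy)
  rw [h3]
  field_simp

lemma tau_step (m : ℕ) (hm : 2 ≤ m) (y : ℝ) (hy : 0 < y) (hirr : Irrational y) :
    0 < tau m y ∧ Irrational (tau m y) := by
  have hk := key_identity m hm y hy
  have hm0 : (0:ℝ) < m := by positivity
  have hmq : (m:ℚ) ≠ 0 := Nat.cast_ne_zero.mpr (by omega)
  have hz : ((m:ℝ) ^ (b1 m y)) ≠ 0 := zpow_ne_zero _ hm0.ne'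
  have ht : tau m y = (((m:ℚ) ^ (-(b1 m y)) : ℚ) : ℝ) / y - 1 := by
    push_cast
    rw [zpow_neg]
    field_simp
    linear_combination hk
  have hirr' : Irrational (tau m y) := by
    rw [ht]
    have h4 := (hirr.ratCast_div (q := (m:ℚ) ^ (-(b1 m y))) (zpow_ne_zero _ hmq)).sub_intCast 1
    simpa using h4
  exact ⟨lt_of_le_of_ne (tau_nonneg m hm y) (Ne.symm hirr'.ne_zero), hirr'⟩

theorem abs_error_formula (m : ℕ) (hm : 2 ≤ m) (ω : ℝ) (hω : Irrational ω) (hω0 : 0 < ω) (hω1 : ω ≤ (m : ℝ) - 1)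
    (p q : ℕ → ℝ)
    (hp0 : p 0 = 0) (hq0 : q 0 = 1) (hp1 : p 1 = 1) (hq1 : q 1 = (m : ℝ) ^ (digit m ω 1))
    (hp : ∀ n, 2 ≤ n → p n = (m : ℝ) ^ (digit m ω n) * p (n - 1) + (m : ℝ) ^ (digit m ω (n - 1)) * p (n - 2))
    (hq : ∀ n, 2 ≤ n → q n = (m : ℝ) ^ (digit m ω n) * q (n - 1) + (m : ℝ) ^ (digit m ω (n - 1)) * q (n - 2)) :
    ∀ n, 1 ≤ n →
      |ω - p n / q n| =
        (m : ℝ) ^ (∑ k ∈ Finset.Icc 1 n, digit m ω k) /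
          (q n * (q (n + 1) + (tau m)^[n + 1] ω * (m : ℝ) ^ (digit m ω (n + 1)) * q n)) := by
  have hm0 : (0:ℝ) < m := by positivity
  set x : ℕ → ℝ := fun n => (tau m)^[n] ω with hxdef
  have hx0 : x 0 = ω := rfl
  have hxs : ∀ n, x (n + 1) = tau m (x n) := fun n => Function.iterate_succ_apply' _ _ _
  -- positivity and irrationality of iterates
  have hxpi : ∀ n, 0 < x n ∧ Irrational (x n) := by
    intro n
    induction n with
    | zero => exact ⟨hω0, hω⟩
    | succ k ih => rw [hxs]; exact tau_step m hm (x k) ih.1 ih.2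
  have hdig : ∀ n, digit m ω (n + 1) = b1 m (x n) := fun n => rfl
  -- key identity
  have hkey : ∀ n, x n * (1 + x (n + 1)) * (m:ℝ) ^ (digit m ω (n + 1)) = 1 := by
    intro n
    rw [hdig, hxs]
    exact key_identity m hm (x n) (hxpi n).1
  -- specialize recurrences
  have hp2 : ∀ n, p (n + 2) = (m:ℝ) ^ (digit m ω (n + 2)) * p (n + 1) + (m:ℝ) ^ (digit m ω (n + 1)) * p n := by
    intro n; have := hp (n + 2) (by omega); simpa using this
  have hq2 : ∀ n, q (n + 2) = (m:ℝ) ^ (digit m ω (n + 2)) * q (n + 1) + (m:ℝ) ^ (digit m ω (n + 1)) * q n := by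
    intro n; have := hq (n + 2) (by omega); simpa using this
  -- q positive
  have hqpos : ∀ n, 0 < q n := by
    have h2 : ∀ n, 0 < q n ∧ 0 < q (n + 1) := by
      intro n
      induction n with
      | zero =>
        refine ⟨by rw [hq0]; norm_num, ?_⟩
        rw [hq1]; exact zpow_pos hm0 _
      | succ k ih =>
        refine ⟨ih.2, ?_⟩
        rw [hq2]
        have := zpow_pos hm0 (digit m ω (k + 2))
        have := zpow_pos hm0 (digit m ω (k + 1))
        nlinarith [ih.1, ih.2]
    exact fun n => (h2 n).1
  -- determinant
  have hdet : ∀ n, p (n + 1) * q n - q (n + 1) * p n =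
      (-1:ℝ) ^ n * (m:ℝ) ^ (∑ k ∈ Finset.Icc 1 n, digit m ω k) := by
    intro n
    induction n with
    | zero => simp [hp0, hq0, hp1, hq1, Finset.Icc_eq_empty (by omega : ¬ (1:ℕ) ≤ 0)]
    | succ k ih =>
      rw [hp2, hq2, Finset.sum_Icc_succ_top (by omega : 1 ≤ k + 1), zpow_add₀ hm0.ne']
      linear_combination (-(m:ℝ) ^ (digit m ω (k + 1))) * ih
  -- convergent identity
  have hconv : ∀ n, ω * (q (n + 1) + x (n + 1) * (m:ℝ) ^ (digit m ω (n + 1)) * q n) =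
      p (n + 1) + x (n + 1) * (m:ℝ) ^ (digit m ω (n + 1)) * p n := by
    intro n
    induction n with
    | zero =>
      rw [hp0, hq0, hp1, hq1]
      have h0 := hkey 0
      rw [hx0] at h0
      linear_combination h0
    | succ k ih =>
      rw [hp2, hq2]
      linear_combination ((m:ℝ) ^ (digit m ω (k + 2)) * (1 + x (k + 2))) * ih +
        ((m:ℝ) ^ (digit m ω (k + 1)) * p k - (m:ℝ) ^ (digit m ω (k + 1)) * ω * q k) * hkey (k + 1)
  -- final
  intro n _
  have hQ : 0 < q (n + 1) + x (n + 1) * (m:ℝ) ^ (digit m ω (n + 1)) * q n := by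
    have h1 : 0 ≤ x (n + 1) := by rw [hxs]; exact tau_nonneg m hm _
    have h2 := zpow_pos hm0 (digit m ω (n + 1))
    have h3 : 0 ≤ x (n + 1) * (m:ℝ) ^ (digit m ω (n + 1)) * q n :=
      mul_nonneg (mul_nonneg h1 h2.le) (hqpos n).le
    linarith [hqpos (n + 1)]
  have hqn := (hqpos n).ne'
  have hQ' := hQ.ne'
  have hmain : ω - p n / q n =
      ((-1:ℝ) ^ n * (m:ℝ) ^ (∑ k ∈ Finset.Icc 1 n, digit m ω k)) /
        (q n * (q (n + 1) + x (n + 1) * (m:ℝ) ^ (digit m ω (n + 1)) * q n)) := by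
    have hstep : ω - p n / q n = (ω * q n - p n) / q n := by field_simp
    rw [hstep, div_eq_div_iff hqn (mul_ne_zero hqn hQ')]
    linear_combination (q n * q n) * hconv n + q n * hdet n
  show |ω - p n / q n| = _ / (q n * (q (n + 1) + x (n + 1) * (m:ℝ) ^ (digit m ω (n + 1)) * q n))
  rw [hmain, abs_div, abs_mul, abs_pow, abs_neg, abs_one, one_pow, one_mul,
    abs_of_pos (zpow_pos hm0 _), abs_of_pos (mul_pos (hqpos n) hQ)]
end
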